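/- Let μ < L be reals and k ≥ 1. Define Ũ_k(η) = U_k(2η/(μ - L)), where U_k is the k-th Chebyshev polynomial of the second kind. Then for every polynomial p of degree at most k-1, ∫_{-(L-μ)/2}^{(L-μ)/2} p(η)·sgn(Ũ_k(η)) dη = 0. -/

import Mathlib

open Polynomial Polynomial.Chebyshev Real Finset




open Real Finset

lemma tl (n m : ℕ) (hn : 0 < n) (hm : m < n) :
    ∑ j ∈ Finset.range n, (-1:ℝ)^j *
      (Real.cos (m*(j*π/n)) - Real.cos (m*((j+1)*π/n))) = 0 := by
  rcases Nat.eq_zero_or_pos m with hm0 | hm1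
  · simp [hm0]
  set θ : ℝ := m * π / n with hθ
  have hθpos : 0 < θ := by
    apply div_pos (by positivity) (by positivity)
  have hθlt : θ < π := by
    rw [hθ, div_lt_iff₀ (by positivity)]
    have : (m:ℝ) < n := by exact_mod_cast hm
    nlinarith [Real.pi_pos]
  set z : ℂ := Complex.exp (θ * Complex.I) with hz
  have hzim : z.im = Real.sin θ := by
    rw [hz]; simp [Complex.exp_ofReal_mul_I_im]
  have hzne : -z ≠ 1 := by
    intro h
    have : z.im = 0 := by
      have := congrArg Complex.im h
      simpa using this
    rw [hzim] at this
    exact (Real.sin_pos_of_pos_of_lt_pi hθpos hθlt).ne' this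
  have hzj : ∀ j : ℕ, (z^j).re = Real.cos (m*(j*π/n)) := by
    intro j
    rw [hz, ← Complex.exp_nat_mul]
    have : (j:ℂ) * (↑θ * Complex.I) = (↑(j*θ):ℝ) * Complex.I := by push_cast; ring
    rw [this, Complex.exp_ofReal_mul_I_re]
    congr 1
    rw [hθ]; ring
  have key : ∑ j ∈ Finset.range n, (-1:ℝ)^j *
      (Real.cos (m*(j*π/n)) - Real.cos (m*((j+1)*π/n)))
      = (∑ j ∈ Finset.range n, (-1:ℂ)^j * (z^j - z^(j+1))).re := by
    rw [Complex.re_sum]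
    refine Finset.sum_congr rfl fun j _ => ?_
    have h1 : ((-1:ℂ)^j * (z^j - z^(j+1))) = ((((-1:ℝ)^j : ℝ)) : ℂ) * (z^j - z^(j+1)) := by
      push_cast; ring
    rw [h1, Complex.re_ofReal_mul, Complex.sub_re, hzj j, hzj (j+1)]
    push_cast
    ring_nf
  rw [key]
  have hfac : ∑ j ∈ Finset.range n, (-1:ℂ)^j * (z^j - z^(j+1))
      = (1 - z) * ∑ j ∈ Finset.range n, (-z)^j := by
    rw [Finset.mul_sum]
    refine Finset.sum_congr rfl fun j _ => ?_
    rw [neg_pow]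
    ring
  have hgeom : ∑ j ∈ Finset.range n, (-z)^j = ((-z)^n - 1)/((-z) - 1) := geom_sum_eq hzne n
  have hzn : z^n = (-1:ℂ)^m := by
    rw [hz, ← Complex.exp_nat_mul]
    have : (n:ℂ) * (↑θ * Complex.I) = (m:ℂ) * (↑Real.pi * Complex.I) := by
      rw [hθ]
      have hn' : (n:ℂ) ≠ 0 := by exact_mod_cast Nat.cast_ne_zero.mpr hn.ne'
      push_cast
      field_simp
    rw [this]
    have : (m:ℂ) * (↑Real.pi * Complex.I) = (m:ℕ) * (↑Real.pi * Complex.I) := by norm_num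
    rw [this, Complex.exp_nat_mul, Complex.exp_pi_mul_I]
  have habs : Complex.normSq z = 1 := by
    rw [hz]
    rw [Complex.normSq_eq_norm_sq, Complex.norm_exp_ofReal_mul_I]
    norm_num
  have hfinal : ((1 - z) * (((-z)^n - 1)/((-z) - 1))).re = 0 := by
    have hre : ((1 - z)/(1 + z)).re = 0 := by
      rw [Complex.div_re, ← add_div]
      have : (1-z).re * (1+z).re + (1-z).im * (1+z).im = 1 - Complex.normSq z := by
        simp [Complex.normSq_apply]
        ring
      rw [this, habs]
      simp
    have hε : (-z)^n = ((-1:ℂ))^(n+m) := by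
      rw [neg_pow, hzn, ← pow_add]
    have h1z : (1+z) ≠ 0 := by
      intro h
      apply hzne
      have : z = -1 := by linear_combination h
      rw [this]; norm_num
    have h2 : (-z) - 1 ≠ 0 := by
      intro h
      apply h1z
      linear_combination -h
    have : (1 - z) * (((-z)^n - 1)/((-z) - 1)) = (1 - (-1:ℂ)^(n+m)) * ((1-z)/(1+z)) := by
      rw [hε]
      field_simp
      ring
    rw [this]
    have hr : ((1:ℂ) - (-1:ℂ)^(n+m)) = (((1 - (-1:ℝ)^(n+m)):ℝ):ℂ) := by push_cast; ring
    rw [hr, Complex.re_ofReal_mul, hre, mul_zero]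
  rw [hfac, hgeom, hfinal]




lemma T_deg : ∀ d : ℕ, (T ℝ (d:ℤ)).natDegree = d ∧ (T ℝ (d:ℤ)).leadingCoeff = 2^(d-1) := by
  intro d
  induction d using Nat.strong_induction_on with
  | _ d ih =>
    match d with
    | 0 => simp [T_zero]
    | 1 => simp [T_one]
    | (e+2) =>
      obtain ⟨h1d, h1l⟩ := ih (e+1) (by omega)
      obtain ⟨h0d, h0l⟩ := ih e (by omega)
      push_cast at h1d h1l h0d h0l ⊢
      have hC2 : (2 : ℝ[X]) = C 2 := by rw [map_ofNat]
      have hT : T ℝ ((e:ℤ)+2) = C 2 * (X * T ℝ ((e:ℤ)+1)) - T ℝ (e:ℤ) := by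
        rw [← hC2, ← mul_assoc]
        exact T_add_two ℝ e
      have hTne : T ℝ ((e:ℤ)+1) ≠ 0 := by
        intro h
        rw [h] at h1l
        simp only [leadingCoeff_zero] at h1l
        exact absurd h1l (pow_pos (by norm_num : (0:ℝ) < 2) _).ne
      have hA : (C (2:ℝ) * (X * T ℝ ((e:ℤ)+1))).natDegree = e + 2 := by
        rw [natDegree_C_mul (by norm_num : (2:ℝ) ≠ 0), natDegree_X_mul hTne, h1d]
      have hAl : (C (2:ℝ) * (X * T ℝ ((e:ℤ)+1))).leadingCoeff = 2^(e+1) := by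
        rw [leadingCoeff_mul, leadingCoeff_mul, leadingCoeff_C, leadingCoeff_X, h1l]
        simp
        ring
      have hdlt : (T ℝ (e:ℤ)).degree < (C (2:ℝ) * (X * T ℝ ((e:ℤ)+1))).degree := by
        apply degree_lt_degree
        rw [hA, h0d]
        omega
      constructor
      · rw [hT, natDegree_eq_of_degree_eq (degree_sub_eq_left_of_degree_lt hdlt), hA]
      · rw [hT, leadingCoeff_sub_of_degree_lt hdlt, hAl]

lemma dl (n : ℕ) (hn : 0 < n) : ∀ d : ℕ, ∀ Q : Polynomial ℝ, Q.natDegree ≤ d → Q.natDegree < n →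
    ∑ j ∈ Finset.range n, (-1:ℝ)^j *
      (Q.eval (Real.cos (j*π/n)) - Q.eval (Real.cos ((j+1)*π/n))) = 0 := by
  intro d
  induction d with
  | zero =>
    intro Q h0 _
    rw [Polynomial.eq_C_of_natDegree_le_zero h0]
    simp
  | succ d ih =>
    intro Q hQd hQn
    by_cases hle : Q.natDegree ≤ d
    · exact ih Q hle hQn
    have hdeg : Q.natDegree = d + 1 := by omega
    have hQne : Q ≠ 0 := by
      intro h
      rw [h] at hdeg
      simp at hdeg
    set Tm := Polynomial.Chebyshev.T ℝ ((d+1 : ℕ) : ℤ) with hTm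
    obtain ⟨hTd, hTl⟩ := T_deg (d+1)
    rw [← hTm] at hTd hTl
    have hcne : Q.leadingCoeff / 2^d ≠ 0 := by
      apply div_ne_zero (leadingCoeff_ne_zero.mpr hQne) (by positivity)
    set c : ℝ := Q.leadingCoeff / 2^d with hc
    have hTmne : Tm ≠ 0 := by
      intro h
      rw [h] at hTd
      simp at hTd
    have hlc : (C c * Tm).leadingCoeff = Q.leadingCoeff := by
      rw [leadingCoeff_mul, leadingCoeff_C, hTl]
      simp only [Nat.add_sub_cancel, hc]
      field_simp
    have hdegs : (C c * Tm).natDegree = Q.natDegree := by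
      rw [natDegree_C_mul hcne, hTd, hdeg]
    have hRdeg : (Q - C c * Tm).degree < Q.degree := by
      apply degree_sub_lt _ hQne hlc.symm
      rw [degree_eq_natDegree hQne, degree_eq_natDegree (mul_ne_zero (by simpa using hcne) hTmne)]
      exact_mod_cast hdegs.symm
    have hRnat : (Q - C c * Tm).natDegree ≤ d := by
      by_cases hR : Q - C c * Tm = 0
      · simp [hR]
      have := natDegree_lt_natDegree hR hRdeg
      omega
    have heval : ∀ x : ℝ, Q.eval x = (Q - C c * Tm).eval x + c * Tm.eval x := by
      intro x
      simp
  -- split sum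
    have hsplit : ∑ j ∈ Finset.range n, (-1:ℝ)^j *
        (Q.eval (Real.cos (j*π/n)) - Q.eval (Real.cos ((j+1)*π/n)))
        = (∑ j ∈ Finset.range n, (-1:ℝ)^j *
            ((Q - C c * Tm).eval (Real.cos (j*π/n)) - (Q - C c * Tm).eval (Real.cos ((j+1)*π/n))))
          + c * ∑ j ∈ Finset.range n, (-1:ℝ)^j *
            (Tm.eval (Real.cos (j*π/n)) - Tm.eval (Real.cos ((j+1)*π/n))) := by
      rw [Finset.mul_sum, ← Finset.sum_add_distrib]
      refine Finset.sum_congr rfl fun j _ => ?_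
      rw [heval, heval]
      ring
    rw [hsplit, ih _ hRnat (lt_of_le_of_lt hRnat (by omega)), zero_add]
    have hTsum : ∑ j ∈ Finset.range n, (-1:ℝ)^j *
        (Tm.eval (Real.cos (j*π/n)) - Tm.eval (Real.cos ((j+1)*π/n)))
        = ∑ j ∈ Finset.range n, (-1:ℝ)^j *
          (Real.cos ((d+1)*((j:ℝ)*π/n)) - Real.cos ((d+1)*(((j:ℝ)+1)*π/n))) := by
      refine Finset.sum_congr rfl fun j _ => ?_
      rw [hTm, T_real_cos, T_real_cos]
      push_cast
      ring_nf
    rw [hTsum]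
    have := tl n (d+1) hn (by omega)
    push_cast at this
    rw [this, mul_zero]



lemma angle_le {n : ℕ} (m : ℕ) (hn : 0 < n) (hm : m ≤ n) : ((m:ℝ) * π / n ≤ π) := by
  rw [div_le_iff₀ (by positivity : (0:ℝ) < (n:ℝ))]
  have : (m:ℝ) ≤ n := by exact_mod_cast hm
  nlinarith [Real.pi_pos]

lemma sign_U (k n : ℕ) (hn : n = k + 1) (j : ℕ) (hj : j < n) (x : ℝ)
    (hx1 : Real.cos (((j:ℝ)+1)*π/n) < x) (hx2 : x < Real.cos ((j:ℝ)*π/n)) :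
    Real.sign ((Polynomial.Chebyshev.U ℝ (k:ℤ)).eval x) = (-1:ℝ)^j := by
  have hn0 : 0 < n := by omega
  have hjn : j + 1 ≤ n := by omega
  have hjc : ((j:ℝ)+1)*π/n ≤ π := by
    have := angle_le (j+1) hn0 hjn
    push_cast at this
    linarith
  have hx1' : -1 ≤ x := by
    refine le_trans ?_ hx1.le
    rw [← Real.cos_pi]
    exact Real.cos_le_cos_of_nonneg_of_le_pi (by positivity) le_rfl hjc
  have hx2' : x ≤ 1 := le_trans hx2.le (Real.cos_le_one _)
  set θ := Real.arccos x with hθ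
  have hcos : Real.cos θ = x := Real.cos_arccos hx1' hx2'
  have hlow : (j:ℝ) * π / n < θ := by
    by_contra hcon
    push_neg at hcon
    have := Real.cos_le_cos_of_nonneg_of_le_pi (Real.arccos_nonneg x)
      (angle_le j hn0 (by omega)) hcon
    rw [hcos] at this
    linarith
  have hhigh : θ < ((j:ℝ)+1) * π / n := by
    by_contra hcon
    push_neg at hcon
    have := Real.cos_le_cos_of_nonneg_of_le_pi (by positivity : (0:ℝ) ≤ ((j:ℝ)+1)*π/n)
      (Real.arccos_le_pi x) hcon
    rw [hcos] at this
    linarith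
  have hθpos : 0 < θ := lt_of_le_of_lt (by positivity) hlow
  have hθpi : θ < π := lt_of_lt_of_le hhigh hjc
  have hsinθ : 0 < Real.sin θ := Real.sin_pos_of_pos_of_lt_pi hθpos hθpi
  have hU : (Polynomial.Chebyshev.U ℝ (k:ℤ)).eval x * Real.sin θ = Real.sin ((n:ℝ) * θ) := by
    rw [← hcos, U_real_cos]
    congr 2
    rw [hn]
    push_cast
    ring
  have hnR : (0:ℝ) < n := by exact_mod_cast hn0
  set φ := (n:ℝ) * θ - j * π with hφ
  have hφ1 : 0 < φ := by
    rw [hφ]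
    have h1 : (j:ℝ) * π < (n:ℝ) * θ := by
      have := (div_lt_iff₀ hnR).mp hlow
      linarith
    linarith
  have hφ2 : φ < π := by
    rw [hφ]
    have h2 : (n:ℝ) * θ < ((j:ℝ)+1) * π := by
      have h3 := hhigh
      rw [lt_div_iff₀ hnR] at h3
      linarith
    linarith
  have hsinφ : 0 < Real.sin φ := Real.sin_pos_of_pos_of_lt_pi hφ1 hφ2
  have hsin : Real.sin ((n:ℝ) * θ) = (-1:ℝ)^j * Real.sin φ := by
    have : (n:ℝ) * θ = φ + (j:ℕ) * π := by rw [hφ]; push_cast; ring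
    rw [this]
    exact Real.sin_add_nat_mul_pi φ j
  have hUx : (Polynomial.Chebyshev.U ℝ (k:ℤ)).eval x = (-1:ℝ)^j * (Real.sin φ / Real.sin θ) := by
    have h4 : (Polynomial.Chebyshev.U ℝ (k:ℤ)).eval x * Real.sin θ
        = ((-1:ℝ)^j * (Real.sin φ / Real.sin θ)) * Real.sin θ := by
      rw [hU, hsin]
      field_simp
    exact mul_right_cancel₀ hsinθ.ne' h4
  rcases Nat.even_or_odd j with hev | hod
  · rw [hUx, hev.neg_one_pow, one_mul, Real.sign_of_pos (div_pos hsinφ hsinθ)]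
  · rw [hUx, hod.neg_one_pow, neg_one_mul,
      Real.sign_of_neg (neg_lt_zero.mpr (div_pos hsinφ hsinθ))]

noncomputable def antider (q : Polynomial ℝ) : Polynomial ℝ :=
  q.sum fun i a => Polynomial.C (a/(i+1)) * Polynomial.X^(i+1)

lemma antider_deriv (q : Polynomial ℝ) : (antider q).derivative = q := by
  unfold antider
  rw [Polynomial.sum_def, Polynomial.derivative_sum]
  have h : ∀ i ∈ q.support,
      Polynomial.derivative (C (q.coeff i/(i+1:ℝ)) * X^(i+1)) = C (q.coeff i) * X^i := by
    intro i _
    rw [Polynomial.derivative_C_mul_X_pow]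
    have h1 : (q.coeff i)/((i:ℝ)+1) * ((i+1:ℕ):ℝ) = q.coeff i := by
      push_cast
      field_simp
    have h2 : i + 1 - 1 = i := by omega
    rw [h1, h2]
  rw [Finset.sum_congr rfl h]
  conv_rhs => rw [← Polynomial.sum_C_mul_X_pow_eq q]
  rw [Polynomial.sum_def]

lemma antider_natDegree (q : Polynomial ℝ) : (antider q).natDegree ≤ q.natDegree + 1 := by
  unfold antider
  rw [Polynomial.sum_def]
  apply Polynomial.natDegree_sum_le_of_forall_le
  intro i hi
  refine le_trans (Polynomial.natDegree_C_mul_le _ _) ?_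
  rw [Polynomial.natDegree_X_pow]
  have := Polynomial.le_natDegree_of_mem_supp i hi
  omega

noncomputable def nod (n i : ℕ) : ℝ := Real.cos (((n - i : ℕ):ℝ) * π / n)

lemma nod_lo (n i : ℕ) (hi : i < n) : nod n i = Real.cos ((((n-1-i:ℕ):ℝ)+1)*π/n) := by
  unfold nod
  congr 2
  have h : n - i = (n-1-i) + 1 := by omega
  rw [h]
  push_cast
  ring

lemma nod_hi (n i : ℕ) (hi : i < n) : nod n (i+1) = Real.cos (((n-1-i:ℕ):ℝ)*π/n) := by
  unfold nod
  have h : n - (i+1) = n-1-i := by omega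
  rw [h]

open MeasureTheory in
lemma piece (k n : ℕ) (hn : n = k + 1) (i : ℕ) (hi : i < n) (q Q : Polynomial ℝ)
    (hQ' : Q.derivative = q) :
    IntervalIntegrable (fun x => q.eval x * Real.sign ((Polynomial.Chebyshev.U ℝ (k:ℤ)).eval x))
      volume (nod n i) (nod n (i+1)) ∧
    (∫ x in nod n i..nod n (i+1), q.eval x * Real.sign ((Polynomial.Chebyshev.U ℝ (k:ℤ)).eval x))
      = (-1:ℝ)^(n-1-i) * (Q.eval (nod n (i+1)) - Q.eval (nod n i)) := by
  have hn0 : 0 < n := by omega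
  have hnR : (0:ℝ) < (n:ℝ) := by exact_mod_cast hn0
  have hlo := nod_lo n i hi
  have hhi := nod_hi n i hi
  have hjc : (((n-1-i:ℕ):ℝ)+1)*π/n ≤ π := by
    have := angle_le (n-1-i+1) hn0 (by omega)
    push_cast at this
    linarith
  have hablt : nod n i < nod n (i+1) := by
    rw [hlo, hhi]
    apply Real.cos_lt_cos_of_nonneg_of_le_pi (by positivity) hjc
    have h1 : (0:ℝ) < π / n := by positivity
    have : ((n-1-i:ℕ):ℝ) * π / n = ((n-1-i:ℕ):ℝ) * (π / n) := by ring
    rw [this]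
    have : (((n-1-i:ℕ):ℝ)+1) * π / n = (((n-1-i:ℕ):ℝ)+1) * (π / n) := by ring
    rw [this]
    apply mul_lt_mul_of_pos_right (by linarith) h1
  have hsg : ∀ x ∈ Set.Ioo (nod n i) (nod n (i+1)),
      Real.sign ((Polynomial.Chebyshev.U ℝ (k:ℤ)).eval x) = (-1:ℝ)^(n-1-i) := by
    intro x hx
    exact sign_U k n hn (n-1-i) (by omega) x (by rw [← hlo]; exact hx.1)
      (by rw [← hhi]; exact hx.2)
  have heq : ∀ᵐ x ∂(volume : Measure ℝ), x ∈ Set.uIoc (nod n i) (nod n (i+1)) →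
      q.eval x * Real.sign ((Polynomial.Chebyshev.U ℝ (k:ℤ)).eval x)
        = q.eval x * (-1:ℝ)^(n-1-i) := by
    have h1 : ∀ᵐ (x:ℝ) ∂(volume : Measure ℝ), x ≠ nod n (i+1) := by
      rw [MeasureTheory.ae_iff]
      have : {x : ℝ | ¬ x ≠ nod n (i+1)} = {nod n (i+1)} := by ext y; simp
      rw [this]
      exact Real.volume_singleton
    filter_upwards [h1] with x hxne hmem
    rw [Set.uIoc_of_le hablt.le] at hmem
    have hxIoo : x ∈ Set.Ioo (nod n i) (nod n (i+1)) := ⟨hmem.1, lt_of_le_of_ne hmem.2 hxne⟩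
    rw [hsg x hxIoo]
  have hg : IntervalIntegrable (fun x => q.eval x * (-1:ℝ)^(n-1-i)) volume
      (nod n i) (nod n (i+1)) :=
    ((q.continuous).mul continuous_const).intervalIntegrable _ _
  have hae : (fun x => q.eval x * Real.sign ((Polynomial.Chebyshev.U ℝ (k:ℤ)).eval x))
      =ᵐ[volume.restrict (Set.uIoc (nod n i) (nod n (i+1)))]
      (fun x => q.eval x * (-1:ℝ)^(n-1-i)) :=
    (MeasureTheory.ae_restrict_iff' measurableSet_uIoc).mpr heq
  refine ⟨hg.congr_ae hae.symm, ?_⟩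
  rw [intervalIntegral.integral_congr_ae heq, intervalIntegral.integral_mul_const]
  have hpoly : (∫ x in nod n i..nod n (i+1), q.eval x)
      = Q.eval (nod n (i+1)) - Q.eval (nod n i) := by
    apply intervalIntegral.integral_eq_sub_of_hasDerivAt (f := fun x => Q.eval x)
    · intro x _
      have h := Polynomial.hasDerivAt Q x
      rw [hQ'] at h
      exact h
    · exact (q.continuous).intervalIntegrable _ _
  rw [hpoly]
  ring

open MeasureTheory in
lemma core (k : ℕ) (hk : 1 ≤ k) (q : Polynomial ℝ) (hq : q.natDegree < k) :
    ∫ x in (-1:ℝ)..1, q.eval x * Real.sign ((Polynomial.Chebyshev.U ℝ (k:ℤ)).eval x) = 0 := by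
  set n := k + 1 with hn
  have hn0 : 0 < n := by omega
  have hQdeg : (antider q).natDegree < n := lt_of_le_of_lt (antider_natDegree q) (by omega)
  have ha0 : nod n 0 = -1 := by
    unfold nod
    simp only [Nat.sub_zero]
    have : ((n:ℕ):ℝ) * π / n = π := by
      field_simp
    rw [this, Real.cos_pi]
  have han : nod n n = 1 := by
    unfold nod
    simp
  have hsum := intervalIntegral.sum_integral_adjacent_intervals (μ := volume)
    (f := fun x => q.eval x * Real.sign ((Polynomial.Chebyshev.U ℝ (k:ℤ)).eval x))
    (a := nod n) (n := n)
    (fun i hi => (piece k n hn i hi q (antider q) (antider_deriv q)).1)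
  rw [ha0, han] at hsum
  rw [← hsum]
  rw [Finset.sum_congr rfl
    (fun i hi => (piece k n hn i (Finset.mem_range.mp hi) q (antider q) (antider_deriv q)).2)]
  have hGm : ∀ i ∈ Finset.range n,
      (-1:ℝ)^(n-1-i) * ((antider q).eval (nod n (i+1)) - (antider q).eval (nod n i))
      = (fun (j : ℕ) => (-1:ℝ)^j * ((antider q).eval (Real.cos ((j:ℝ)*π/(n:ℝ)))
          - (antider q).eval (Real.cos (((j:ℝ)+1)*π/(n:ℝ))))) (n-1-i) := by
    intro i hi
    have hi' := Finset.mem_range.mp hi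
    dsimp only
    rw [nod_lo n i hi', nod_hi n i hi']
  rw [Finset.sum_congr rfl hGm]
  exact (Finset.sum_range_reflect (fun (j : ℕ) => (-1:ℝ)^j *
      ((antider q).eval (Real.cos ((j:ℝ)*π/(n:ℝ)))
        - (antider q).eval (Real.cos (((j:ℝ)+1)*π/(n:ℝ))))) n).trans
    (dl n hn0 (antider q).natDegree (antider q) le_rfl hQdeg)

theorem stmt_13 (μ L : ℝ) (hμL : μ < L) (k : ℕ) (hk : 1 ≤ k)
    (p : Polynomial ℝ) (hp : p.degree < k) :
    ∫ η in (-(L - μ) / 2)..((L - μ) / 2),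
        p.eval η * Real.sign ((Polynomial.Chebyshev.U ℝ k).eval (2 * η / (μ - L))) = 0 := by
  by_cases hp0 : p = 0
  · simp [hp0]
  have hpn : p.natDegree < k := (Polynomial.natDegree_lt_iff_degree_lt hp0).mpr hp
  set c := (L - μ)/2 with hc
  have hc0 : 0 < c := by rw [hc]; linarith
  set q := p.comp (Polynomial.C (-c) * Polynomial.X) with hqdef
  have hqdeg : q.natDegree < k := by
    rw [hqdef, Polynomial.natDegree_comp,
      Polynomial.natDegree_C_mul (neg_ne_zero.mpr hc0.ne'), Polynomial.natDegree_X, mul_one]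
    exact hpn
  have hcore := core k hk q hqdeg
  have hb : -(L-μ)/2 = -c := by rw [hc]; ring
  rw [hb]
  have hkey : ∀ η : ℝ, p.eval η * Real.sign ((Polynomial.Chebyshev.U ℝ (k:ℤ)).eval (2*η/(μ-L)))
      = (fun x => q.eval x * Real.sign ((Polynomial.Chebyshev.U ℝ (k:ℤ)).eval x)) (-c⁻¹ * η) := by
    intro η
    simp only [hqdef, Polynomial.eval_comp, Polynomial.eval_mul, Polynomial.eval_C,
      Polynomial.eval_X]
    have h1 : -c * (-c⁻¹ * η) = η := by field_simp
    have h2 : 2*η/(μ-L) = -c⁻¹ * η := by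
      have h3 : μ - L ≠ 0 := by
        intro h
        linarith
      have h4 : L - μ ≠ 0 := by
        intro h
        linarith
      rw [hc, div_eq_iff h3, inv_div]
      field_simp
      ring
    rw [h1, h2]
  simp only [hkey]
  rw [intervalIntegral.integral_comp_mul_left
    (fun x => q.eval x * Real.sign ((Polynomial.Chebyshev.U ℝ (k:ℤ)).eval x))
    (neg_ne_zero.mpr (inv_ne_zero hc0.ne'))]
  have hb1 : -c⁻¹ * -c = 1 := by field_simp
  have hb2 : -c⁻¹ * c = -1 := by field_simp
  rw [hb1, hb2, intervalIntegral.integral_symm, hcore]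
  simp
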